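/- Let (Γ, I) be an independence alphabet and η : M(Γ, I) → Q an embedding into the queue monoid. Define Γ₊ = {a : π(η(a)) ≠ ε and π̄(η(a)) = ε} and Γ₋ = {a : π(η(a)) = ε and π̄(η(a)) ≠ ε}. Then no two letters of Γ₊ are independent, no two letters of Γ₋ are independent, and every letter of Γ₊ is independent of every letter of Γ₋; i.e., (Γ₊ ∪ Γ₋, I) is a complete bipartite graph. -/

import Mathlib

def qstep (A : Type) [DecidableEq A] : Option (List A) → A ⊕ A → Option (List A)
  | none, _ => none
  | some q, Sum.inl a => some (q ++ [a])
  | some q, Sum.inr a =>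
      match q with
      | [] => none
      | b :: q' => if b = a then some q' else none

def qact (A : Type) [DecidableEq A] (q : Option (List A)) (u : List (A ⊕ A)) :
    Option (List A) :=
  u.foldl (qstep A) q

def QEquiv (A : Type) [DecidableEq A] (u v : List (A ⊕ A)) : Prop :=
  ∀ q : Option (List A), qact A q u = qact A q v

/-- The congruence on the free monoid of queue actions identifying sequences with the
same effect on every queue state. -/
def queueCon (A : Type) [DecidableEq A] : Con (FreeMonoid (A ⊕ A)) where
  r u v := QEquiv A u.toList v.toList
  iseqv := ⟨fun _ _ => rfl, fun h q => (h q).symm, fun h1 h2 q => (h1 q).trans (h2 q)⟩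
  mul' := by
    intro u v u' v' hu hv q
    have h1 := hu q
    have h2 := hv (qact A q v.toList)
    show qact A q (u * u').toList = qact A q (v * v').toList
    rw [FreeMonoid.toList_mul, FreeMonoid.toList_mul]
    unfold qact at h1 h2 ⊢
    rw [List.foldl_append, List.foldl_append, h1, h2]

/-- The queue monoid over the alphabet `A`. -/
abbrev QueueMonoid (A : Type) [DecidableEq A] := (queueCon A).Quotient

/-- The congruence on the free monoid generated by `ab = ba` for independent `(a,b)`. -/
def traceCon {Γ : Type} (I : Γ → Γ → Prop) : Con (FreeMonoid Γ) :=
  conGen fun u v => ∃ a b : Γ, I a b ∧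
    u = FreeMonoid.of a * FreeMonoid.of b ∧ v = FreeMonoid.of b * FreeMonoid.of a

/-- The trace monoid of the independence alphabet `(Γ, I)`. -/
abbrev TraceMonoid {Γ : Type} (I : Γ → Γ → Prop) := (traceCon I).Quotient

/-- Positive projection: erase all read actions. -/
def ppr {A : Type} (u : List (A ⊕ A)) : List A :=
  u.filterMap (Sum.elim some fun _ => none)

/-- Negative projection: erase all write actions (mapping ā to a). -/
def npr {A : Type} (u : List (A ⊕ A)) : List A :=
  u.filterMap (Sum.elim (fun _ => none) some)

/-- `a ∈ Γ₊`: some (equivalently, every) representative of `η(a)` has nonempty positive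
projection and empty negative projection. -/
def GammaPlus {Γ A : Type} [DecidableEq A] (I : Γ → Γ → Prop)
    (η : TraceMonoid I →* QueueMonoid A) (a : Γ) : Prop :=
  ∃ w : List (A ⊕ A),
    (queueCon A).mk' (FreeMonoid.ofList w) = η ((traceCon I).mk' (FreeMonoid.of a)) ∧
    ppr w ≠ [] ∧ npr w = []

/-- `a ∈ Γ₋`: some representative of `η(a)` has empty positive projection and nonempty
negative projection. -/
def GammaMinus {Γ A : Type} [DecidableEq A] (I : Γ → Γ → Prop)
    (η : TraceMonoid I →* QueueMonoid A) (a : Γ) : Prop :=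
  ∃ w : List (A ⊕ A),
    (queueCon A).mk' (FreeMonoid.ofList w) = η ((traceCon I).mk' (FreeMonoid.of a)) ∧
    ppr w = [] ∧ npr w ≠ []

/-- `a ∈ Γ±`: some representative of `η(a)` has both projections nonempty. -/
def GammaPM {Γ A : Type} [DecidableEq A] (I : Γ → Γ → Prop)
    (η : TraceMonoid I →* QueueMonoid A) (a : Γ) : Prop :=
  ∃ w : List (A ⊕ A),
    (queueCon A).mk' (FreeMonoid.ofList w) = η ((traceCon I).mk' (FreeMonoid.of a)) ∧
    ppr w ≠ [] ∧ npr w ≠ []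

/-! ### Auxiliary lemmas -/

section ListPow

/-- `n`-fold concatenation of a list. -/
def lpow {α : Type*} (x : List α) : ℕ → List α
  | 0 => []
  | n + 1 => x ++ lpow x n

@[simp] lemma lpow_zero {α : Type*} (x : List α) : lpow x 0 = [] := rfl
@[simp] lemma lpow_succ {α : Type*} (x : List α) (n : ℕ) :
    lpow x (n + 1) = x ++ lpow x n := rfl

@[simp] lemma lpow_nil {α : Type*} (n : ℕ) : lpow ([] : List α) n = [] := by
  induction n with
  | zero => rfl
  | succ n ih => simp [ih]

@[simp] lemma lpow_length {α : Type*} (x : List α) (n : ℕ) :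
    (lpow x n).length = n * x.length := by
  induction n with
  | zero => simp
  | succ n ih => simp [ih, Nat.succ_mul, Nat.add_comm]

lemma lpow_add {α : Type*} (x : List α) (m n : ℕ) :
    lpow x (m + n) = lpow x m ++ lpow x n := by
  induction m with
  | zero => simp
  | succ m ih => simpa [Nat.succ_add, ih] using (List.append_assoc _ _ _).symm

lemma lpow_map {α β : Type*} (f : α → β) (x : List α) (n : ℕ) :
    lpow (x.map f) n = (lpow x n).map f := by
  induction n with
  | zero => rfl
  | succ n ih => simp [ih]

lemma comm_lpow {α : Type*} {x y : List α} (h : x ++ y = y ++ x) (n : ℕ) :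
    x ++ lpow y n = lpow y n ++ x := by
  induction n with
  | zero => simp
  | succ n ih =>
    calc x ++ (y ++ lpow y n) = (x ++ y) ++ lpow y n := (List.append_assoc _ _ _).symm
    _ = y ++ (x ++ lpow y n) := by rw [h, List.append_assoc]
    _ = (y ++ lpow y n) ++ x := by rw [ih, List.append_assoc]

lemma lpow_append {α : Type*} {x y : List α} (h : x ++ y = y ++ x) (n : ℕ) :
    lpow (x ++ y) n = lpow x n ++ lpow y n := by
  induction n with
  | zero => simp
  | succ n ih =>
    simp only [lpow_succ, ih]
    calc (x ++ y) ++ (lpow x n ++ lpow y n)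
        = x ++ ((y ++ lpow x n) ++ lpow y n) := by simp [List.append_assoc]
    _ = x ++ ((lpow x n ++ y) ++ lpow y n) := by rw [comm_lpow h.symm n]
    _ = (x ++ lpow x n) ++ (y ++ lpow y n) := by simp [List.append_assoc]

/-- Commuting words have a common power. -/
lemma comm_pow_eq {α : Type*} :
    ∀ N (x y : List α), x.length + y.length ≤ N → x ++ y = y ++ x →
      lpow x y.length = lpow y x.length := by
  intro N
  induction N with
  | zero =>
    intro x y hN _
    have hx : x = [] := List.length_eq_zero_iff.mp (by omega)
    have hy : y = [] := List.length_eq_zero_iff.mp (by omega)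
    subst hx; subst hy; rfl
  | succ N ih =>
    have key : ∀ x y : List α, x.length + y.length ≤ N + 1 → x ++ y = y ++ x →
        x.length ≤ y.length → lpow x y.length = lpow y x.length := by
      intro x y hN h hle
      rcases List.eq_nil_or_concat x with rfl | hx
      · simp
      have hxne : x ≠ [] := by rcases hx with ⟨l, a, rfl⟩; simp
      have hxpos : 0 < x.length := List.length_pos_iff.mpr hxne
      set y' := y.drop x.length with hy'
      have hxtake : x = y.take x.length := by
        have h1 : (x ++ y).take x.length = x := by
          rw [List.take_append_of_le_length (le_refl _), List.take_length]
        have h2 : (y ++ x).take x.length = y.take x.length :=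
          List.take_append_of_le_length hle
        calc x = (x ++ y).take x.length := h1.symm
        _ = (y ++ x).take x.length := by rw [h]
        _ = y.take x.length := h2
      have hysplit : y = x ++ y' := by
        conv_lhs => rw [← List.take_append_drop x.length y]
        rw [← hxtake, hy']
      have hcomm' : x ++ y' = y' ++ x := by
        apply List.append_cancel_left (as := x)
        have hh := h
        rw [hysplit] at hh
        calc x ++ (x ++ y') = (x ++ y') ++ x := hh
        _ = x ++ (y' ++ x) := by rw [List.append_assoc]
      have hy'len : y'.length = y.length - x.length := by simp [hy']
      have ih' : lpow x y'.length = lpow y' x.length :=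
        ih x y' (by omega) hcomm'
      have hlen : y.length = x.length + y'.length := by omega
      calc lpow x y.length = lpow x x.length ++ lpow x y'.length := by
            rw [hlen, lpow_add]
      _ = lpow x x.length ++ lpow y' x.length := by rw [ih']
      _ = lpow (x ++ y') x.length := (lpow_append hcomm' _).symm
      _ = lpow y x.length := by rw [← hysplit]
    intro x y hN h
    rcases le_total x.length y.length with hle | hle
    · exact key x y hN h hle
    · exact (key y x (by omega) h.symm hle).symm

end ListPow

section QueueLemmas
variable {A : Type} [DecidableEq A]

@[simp] lemma qact_none (u : List (A ⊕ A)) : qact A none u = none := by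
  induction u with
  | nil => rfl
  | cons a u ih => exact ih

lemma qact_append (q : Option (List A)) (u v : List (A ⊕ A)) :
    qact A q (u ++ v) = qact A (qact A q u) v :=
  List.foldl_append ..

@[simp] lemma qact_writes (q : List A) (x : List A) :
    qact A (some q) (x.map Sum.inl) = some (q ++ x) := by
  induction x generalizing q with
  | nil => simp [qact]
  | cons a x ih =>
    show qact A (some (q ++ [a])) (x.map Sum.inl) = _
    rw [ih]; simp

lemma qact_reads (q : List A) (y : List A) :
    qact A (some q) (y.map Sum.inr) =
      if y <+: q then some (q.drop y.length) else none := by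
  induction y generalizing q with
  | nil => simp [qact]
  | cons b y ih =>
    cases q with
    | nil =>
      show qact A none _ = _
      rw [qact_none, if_neg]
      intro hc
      simpa using hc.length_le
    | cons c q' =>
      show qact A (if c = b then some q' else none) (y.map Sum.inr) = _
      by_cases hcb : c = b
      · subst hcb
        rw [if_pos rfl, ih]
        by_cases h : y <+: q'
        · rw [if_pos h, if_pos (List.cons_prefix_cons.mpr ⟨rfl, h⟩)]
          simp
        · rw [if_neg h, if_neg]
          intro hc
          exact h (List.cons_prefix_cons.mp hc).2
      · rw [if_neg hcb, qact_none, if_neg]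
        intro hc
        exact hcb ((List.cons_prefix_cons.mp hc).1).symm

lemma read_after_pad (y s x : List A) (hlen : y.length ≤ s.length) :
    (if y <+: s ++ x then some ((s ++ x).drop y.length) else none)
      = if y <+: s then some (s.drop y.length ++ x) else none := by
  by_cases h : y <+: s
  · rw [if_pos h, if_pos (h.trans (List.prefix_append s x)),
      List.drop_append_of_le_length hlen]
  · rw [if_neg h, if_neg]
    intro hc
    apply h
    rw [List.prefix_iff_eq_take] at hc ⊢
    exact hc.trans (List.take_append_of_le_length hlen)

@[simp] lemma ppr_cons_inl {a : A} {w : List (A ⊕ A)} :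
    ppr (Sum.inl a :: w) = a :: ppr w := rfl
@[simp] lemma ppr_cons_inr {a : A} {w : List (A ⊕ A)} :
    ppr (Sum.inr a :: w) = ppr w := rfl
@[simp] lemma npr_cons_inl {a : A} {w : List (A ⊕ A)} :
    npr (Sum.inl a :: w) = npr w := rfl
@[simp] lemma npr_cons_inr {a : A} {w : List (A ⊕ A)} :
    npr (Sum.inr a :: w) = a :: npr w := rfl

lemma eq_map_inl_of_npr_eq_nil {w : List (A ⊕ A)} (h : npr w = []) :
    w = (ppr w).map Sum.inl := by
  induction w with
  | nil => rfl
  | cons c w ih =>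
    cases c with
    | inl a => rw [npr_cons_inl] at h; rw [ppr_cons_inl, List.map_cons, ← ih h]
    | inr a => simp at h

lemma eq_map_inr_of_ppr_eq_nil {w : List (A ⊕ A)} (h : ppr w = []) :
    w = (npr w).map Sum.inr := by
  induction w with
  | nil => rfl
  | cons c w ih =>
    cases c with
    | inl a => simp at h
    | inr a => rw [ppr_cons_inr] at h; rw [npr_cons_inr, List.map_cons, ← ih h]

end QueueLemmas

lemma mk'_eq_iff {M : Type*} [MulOneClass M] (c : Con M) {u v : M} :
    c.mk' u = c.mk' v ↔ c u v := by
  rw [show c.mk' u = (u : c.Quotient) from rfl, show c.mk' v = (v : c.Quotient) from rfl]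
  exact Con.eq c

section TraceLemmas
variable {Γ : Type} {I : Γ → Γ → Prop}

lemma trace_filter (p : Γ → Bool)
    (hp : ∀ c d, p c = true → p d = true → ¬ I c d)
    {u v : FreeMonoid Γ} (h : traceCon I u v) :
    u.toList.filter p = v.toList.filter p := by
  let C : Con (FreeMonoid Γ) :=
    { r := fun u v => u.toList.filter p = v.toList.filter p
      iseqv := ⟨fun _ => rfl, Eq.symm, Eq.trans⟩
      mul' := by
        intro u v u' v' h1 h2
        show (u * u').toList.filter p = (v * v').toList.filter p
        rw [FreeMonoid.toList_mul, FreeMonoid.toList_mul, List.filter_append,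
          List.filter_append, h1, h2] }
  have hle : traceCon I ≤ C := by
    apply Con.conGen_le.mpr
    rintro x y ⟨a, b, hab, rfl, rfl⟩
    show List.filter p [a, b] = List.filter p [b, a]
    by_cases ha : p a <;> by_cases hb : p b
    · exact absurd hab (hp a b ha hb)
    all_goals simp [List.filter, ha, hb]
  exact hle h

end TraceLemmas

section EtaLemmas
variable {Γ A : Type} [DecidableEq A] {I : Γ → Γ → Prop}

lemma T_append (s t : List Γ) :
    (traceCon I).mk' (FreeMonoid.ofList (s ++ t))
      = (traceCon I).mk' (FreeMonoid.ofList s) * (traceCon I).mk' (FreeMonoid.ofList t) := by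
  rw [FreeMonoid.ofList_append, map_mul]

lemma Q_append (s t : List (A ⊕ A)) :
    (queueCon A).mk' (FreeMonoid.ofList (s ++ t))
      = (queueCon A).mk' (FreeMonoid.ofList s) * (queueCon A).mk' (FreeMonoid.ofList t) := by
  rw [FreeMonoid.ofList_append, map_mul]

lemma eta_rep (η : TraceMonoid I →* QueueMonoid A) (a : Γ) (w : List (A ⊕ A))
    (hw : (queueCon A).mk' (FreeMonoid.ofList w) = η ((traceCon I).mk' (FreeMonoid.of a)))
    (n : ℕ) :
    η ((traceCon I).mk' (FreeMonoid.ofList (List.replicate n a)))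
      = (queueCon A).mk' (FreeMonoid.ofList (lpow w n)) := by
  induction n with
  | zero =>
    show η ((traceCon I).mk' 1) = (queueCon A).mk' 1
    rw [map_one, map_one, map_one]
  | succ n ih =>
    rw [List.replicate_succ, lpow_succ]
    rw [show (a :: List.replicate n a) = [a] ++ List.replicate n a from rfl]
    rw [T_append, Q_append, map_mul, ih,
      show FreeMonoid.ofList [a] = FreeMonoid.of a from rfl, ← hw]

end EtaLemmas


lemma pow_clash {Γ A : Type} [DecidableEq A] {I : Γ → Γ → Prop}
    (hirr : ∀ a, ¬ I a a)
    (η : TraceMonoid I →* QueueMonoid A) (hη : Function.Injective η)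
    (a b : Γ) (hab : I a b) (f : A → A ⊕ A) (x y : List A)
    (hwa : (queueCon A).mk' (FreeMonoid.ofList (x.map f))
      = η ((traceCon I).mk' (FreeMonoid.of a)))
    (hwb : (queueCon A).mk' (FreeMonoid.ofList (y.map f))
      = η ((traceCon I).mk' (FreeMonoid.of b)))
    (hcomm : x ++ y = y ++ x) (hy : y ≠ []) : False := by
  classical
  have hne : b ≠ a := fun h => hirr a (h ▸ hab)
  have hL : lpow x y.length = lpow y x.length :=
    comm_pow_eq (x.length + y.length) x y le_rfl hcomm
  have h1 := eta_rep η a (x.map f) hwa y.length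
  have h2 := eta_rep η b (y.map f) hwb x.length
  have h3 : η ((traceCon I).mk' (FreeMonoid.ofList (List.replicate y.length a)))
      = η ((traceCon I).mk' (FreeMonoid.ofList (List.replicate x.length b))) := by
    rw [h1, h2, lpow_map, lpow_map, hL]
  have h4 : traceCon I (FreeMonoid.ofList (List.replicate y.length a))
      (FreeMonoid.ofList (List.replicate x.length b)) := (mk'_eq_iff _).mp (hη h3)
  have h5 := trace_filter (fun c => decide (c = a))
    (fun c d hc hd => by
      simp only [decide_eq_true_eq] at hc hd
      subst hc; subst hd; exact hirr _) h4
  rw [FreeMonoid.toList_ofList, FreeMonoid.toList_ofList, List.filter_replicate,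
    List.filter_replicate] at h5
  rw [if_pos (by simp), if_neg (by simp [hne])] at h5
  have : y.length = 0 := by simpa using congrArg List.length h5
  exact hy (List.length_eq_zero_iff.mp this)

/-- If `η` embeds the trace monoid into the queue monoid, then no two letters of
`Γ₊` are independent, no two letters of `Γ₋` are independent, and every letter of
`Γ₊` is independent of every letter of `Γ₋`: `(Γ₊ ∪ Γ₋, I)` is complete bipartite. -/
theorem stmt14 (Γ A : Type) [DecidableEq A] (I : Γ → Γ → Prop)
    (hirr : ∀ a, ¬ I a a) (hsym : ∀ a b, I a b → I b a)
    (η : TraceMonoid I →* QueueMonoid A) (hη : Function.Injective η) :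
    (∀ a b : Γ, GammaPlus I η a → GammaPlus I η b → ¬ I a b) ∧
    (∀ a b : Γ, GammaMinus I η a → GammaMinus I η b → ¬ I a b) ∧
    (∀ a b : Γ, GammaPlus I η a → GammaMinus I η b → I a b) := by
  -- common: the image of the two-letter word `[c, d]`
  have hpair : ∀ (c d : Γ) (wc wd : List (A ⊕ A)),
      (queueCon A).mk' (FreeMonoid.ofList wc) = η ((traceCon I).mk' (FreeMonoid.of c)) →
      (queueCon A).mk' (FreeMonoid.ofList wd) = η ((traceCon I).mk' (FreeMonoid.of d)) →
      η ((traceCon I).mk' (FreeMonoid.ofList [c, d]))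
        = (queueCon A).mk' (FreeMonoid.ofList (wc ++ wd)) := by
    intro c d wc wd hc hd
    rw [show ([c, d] : List Γ) = [c] ++ [d] from rfl, T_append, Q_append, map_mul,
      show FreeMonoid.ofList [c] = FreeMonoid.of c from rfl,
      show FreeMonoid.ofList [d] = FreeMonoid.of d from rfl, ← hc, ← hd]
  have hswap : ∀ (c d : Γ), I c d →
      traceCon I (FreeMonoid.ofList [c, d]) (FreeMonoid.ofList [d, c]) :=
    fun c d hcd => ConGen.Rel.of _ _ ⟨c, d, hcd, rfl, rfl⟩
  refine ⟨?_, ?_, ?_⟩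
  · -- two write letters are dependent
    rintro a b ⟨wa, hwa, hpa, hna⟩ ⟨wb, hwb, hpb, hnb⟩ hab
    have hwa' : wa = (ppr wa).map Sum.inl := eq_map_inl_of_npr_eq_nil hna
    have hwb' : wb = (ppr wb).map Sum.inl := eq_map_inl_of_npr_eq_nil hnb
    have hmk : (queueCon A).mk' (FreeMonoid.ofList (wa ++ wb))
        = (queueCon A).mk' (FreeMonoid.ofList (wb ++ wa)) := by
      have h0 := congrArg η ((mk'_eq_iff _).mpr (hswap a b hab))
      rw [hpair a b wa wb hwa hwb, hpair b a wb wa hwb hwa] at h0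
      exact h0
    have hq : QEquiv A (wa ++ wb) (wb ++ wa) := (mk'_eq_iff _).mp hmk
    have hcomm : ppr wa ++ ppr wb = ppr wb ++ ppr wa := by
      have h0 := hq (some [])
      rw [hwa', hwb', ← List.map_append, ← List.map_append, qact_writes,
        qact_writes] at h0
      simpa using h0
    rw [hwa'] at hwa; rw [hwb'] at hwb
    exact pow_clash hirr η hη a b hab Sum.inl (ppr wa) (ppr wb) hwa hwb hcomm hpb
  · -- two read letters are dependent
    rintro a b ⟨wa, hwa, hpa, hna⟩ ⟨wb, hwb, hpb, hnb⟩ hab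
    set y1 := npr wa with hy1
    set y2 := npr wb with hy2
    have hwa' : wa = y1.map Sum.inr := eq_map_inr_of_ppr_eq_nil hpa
    have hwb' : wb = y2.map Sum.inr := eq_map_inr_of_ppr_eq_nil hpb
    have hmk : (queueCon A).mk' (FreeMonoid.ofList (wa ++ wb))
        = (queueCon A).mk' (FreeMonoid.ofList (wb ++ wa)) := by
      have h0 := congrArg η ((mk'_eq_iff _).mpr (hswap a b hab))
      rw [hpair a b wa wb hwa hwb, hpair b a wb wa hwb hwa] at h0
      exact h0
    have hq : QEquiv A (wa ++ wb) (wb ++ wa) := (mk'_eq_iff _).mp hmk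
    have hcomm : y1 ++ y2 = y2 ++ y1 := by
      have h0 := hq (some (y1 ++ y2))
      rw [hwa', hwb', ← List.map_append, ← List.map_append, qact_reads,
        qact_reads, if_pos List.prefix_rfl] at h0
      by_cases hpre : y2 ++ y1 <+: y1 ++ y2
      · exact (hpre.eq_of_length (by simp [Nat.add_comm])).symm
      · rw [if_neg hpre] at h0
        exact absurd h0 (by simp)
    rw [hwa'] at hwa; rw [hwb'] at hwb
    exact pow_clash hirr η hη a b hab Sum.inr y1 y2 hwa hwb hcomm hnb
  · -- a write letter and a read letter are independent
    rintro a b ⟨wa, hwa, hpa, hna⟩ ⟨wb, hwb, hpb, hnb⟩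
    by_contra hnI
    classical
    have hwa' : wa = (ppr wa).map Sum.inl := eq_map_inl_of_npr_eq_nil hna
    have hwb' : wb = (npr wb).map Sum.inr := eq_map_inr_of_ppr_eq_nil hpb
    set x := ppr wa with hx
    set y := npr wb with hy
    have hne : a ≠ b := by
      rintro rfl
      have hq0 : QEquiv A wa wb := (mk'_eq_iff _).mp (hwa.trans hwb.symm)
      have h0 := hq0 (some ([] : List A))
      rw [hwa', hwb', qact_writes, qact_reads, if_neg] at h0
      · exact Option.some_ne_none _ h0
      · intro hc
        exact hnb (List.length_eq_zero_iff.mp (Nat.le_zero.mp (by simpa using hc.length_le)))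
    set m := y.length with hm
    have hxpos : 0 < x.length := List.length_pos_iff.mpr hpa
    have hlpows : lpow x (m + 1) = lpow x m ++ x := by
      rw [lpow_add]; simp
    -- the crucial queue identity
    have hq : QEquiv A (((lpow x m).map Sum.inl ++ wb) ++ wa)
        ((lpow x (m + 1)).map Sum.inl ++ wb) := by
      intro q
      cases q with
      | none => rw [qact_none, qact_none]
      | some q =>
        rw [qact_append, qact_append, qact_append, qact_writes, qact_writes,
          hwb', qact_reads, qact_reads, hwa', hlpows]
        have hlen : y.length ≤ (q ++ lpow x m).length := by
          have := Nat.le_mul_of_pos_right y.length hxpos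
          simp only [List.length_append, lpow_length, hm]
          omega
        rw [← List.append_assoc,
          read_after_pad y (q ++ lpow x m) x hlen]
        by_cases hpre : y <+: q ++ lpow x m
        · rw [if_pos hpre, if_pos hpre, qact_writes]
        · rw [if_neg hpre, if_neg hpre, qact_none]
    have hmk : (queueCon A).mk' (FreeMonoid.ofList (((lpow x m).map Sum.inl ++ wb) ++ wa))
        = (queueCon A).mk' (FreeMonoid.ofList ((lpow x (m + 1)).map Sum.inl ++ wb)) :=
      (mk'_eq_iff _).mpr hq
    have e1 : η ((traceCon I).mk' (FreeMonoid.ofList ((List.replicate m a ++ [b]) ++ [a])))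
        = (queueCon A).mk' (FreeMonoid.ofList (((lpow x m).map Sum.inl ++ wb) ++ wa)) := by
      rw [T_append, Q_append, map_mul, T_append, Q_append, map_mul,
        eta_rep η a ((ppr wa).map Sum.inl) (hwa' ▸ hwa) m, ← lpow_map,
        show FreeMonoid.ofList [b] = FreeMonoid.of b from rfl,
        show FreeMonoid.ofList [a] = FreeMonoid.of a from rfl, ← hwb, ← hwa, ← hx]
    have e2 : η ((traceCon I).mk' (FreeMonoid.ofList (List.replicate (m + 1) a ++ [b])))
        = (queueCon A).mk' (FreeMonoid.ofList ((lpow x (m + 1)).map Sum.inl ++ wb)) := by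
      rw [T_append, Q_append, map_mul,
        eta_rep η a ((ppr wa).map Sum.inl) (hwa' ▸ hwa) (m + 1), ← lpow_map,
        show FreeMonoid.ofList [b] = FreeMonoid.of b from rfl, ← hwb, ← hx]
    have h4 : traceCon I (FreeMonoid.ofList ((List.replicate m a ++ [b]) ++ [a]))
        (FreeMonoid.ofList (List.replicate (m + 1) a ++ [b])) :=
      (mk'_eq_iff _).mp (hη (by rw [e1, e2, hmk]))
    have h5 := trace_filter (fun c => decide (c = a) || decide (c = b))
      (fun c d hc hd => by
        simp only [Bool.or_eq_true, decide_eq_true_eq] at hc hd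
        rcases hc with rfl | rfl <;> rcases hd with rfl | rfl
        · exact hirr _
        · exact hnI
        · exact fun h => hnI (hsym _ _ h)
        · exact hirr _) h4
    rw [FreeMonoid.toList_ofList, FreeMonoid.toList_ofList,
      List.filter_eq_self.mpr, List.filter_eq_self.mpr] at h5
    · rw [List.replicate_succ', List.append_assoc, List.append_assoc] at h5
      have h6 := List.append_cancel_left h5
      simp only [List.singleton_append, List.cons_append, List.cons.injEq] at h6
      exact hne h6.1.symm
    all_goals
      intro c hc
      simp only [List.mem_append, List.mem_replicate, List.mem_singleton] at hc
      simp only [Bool.or_eq_true, decide_eq_true_eq]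
      tauto
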